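/- If ξ₁ ≤ −log(1 − q(0)), then sup_{p ∈ [0,1)} ξ₂(p) ≥ ξ₁. -/

import Mathlib

open Finset

/-- `Q̃₂(ξ,p) = 1 − e^ξ + (1−p)·e^ξ·∑_{j=0}^b q(j)·p^j·e^{jξ}`, the numerator of the
critical-exponent equation for the algorithm class `𝒜₂`. -/
noncomputable def Qt2 (b : ℕ) (q : ℕ → ℝ) (ξ p : ℝ) : ℝ :=
  1 - Real.exp ξ + (1 - p) * Real.exp ξ *
    ∑ j ∈ Finset.range (b + 1), q j * p ^ j * Real.exp (j * ξ)

/-- `Q₁(ξ) = 1 − e^ξ·∑_{j=0}^a p₂(j)·e^{jξ}`, whose unique positive root is the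
critical exponent of the minimal-randomization algorithm `𝒢₁`. -/
noncomputable def Q1 (a : ℕ) (p₂ : ℕ → ℝ) (ξ : ℝ) : ℝ :=
  1 - Real.exp ξ * ∑ j ∈ Finset.range (a + 1), p₂ j * Real.exp (j * ξ)

/-- If `ξ₁ ≤ −log(1 − q(0))`, then `sup_{p ∈ [0,1)} ξ₂(p) ≥ ξ₁`. -/
theorem stmt_16 (a b : ℕ) (q p₂ : ℕ → ℝ)
    (hq : ∀ j, 0 ≤ q j) (hp₂ : ∀ j, 0 ≤ p₂ j)
    (hqb : ∀ j, b < j → q j = 0) (hp₂a : ∀ j, a < j → p₂ j = 0)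
    (hq0 : 0 < q 0) (hp₂pos : 0 < ∑ j ∈ Finset.range (a + 1), p₂ j)
    (hsum : ∑ j ∈ Finset.range (b + 1), q j + ∑ j ∈ Finset.range (a + 1), p₂ j = 1)
    (ξ₁ : ℝ) (hξ₁ : 0 < ξ₁ ∧ Q1 a p₂ ξ₁ = 0 ∧ ∀ ξ : ℝ, 0 < ξ → Q1 a p₂ ξ = 0 → ξ = ξ₁)
    (ξ₂ : ℝ → ℝ)
    (hξ₂ : ∀ p ∈ Set.Ico (0 : ℝ) 1,
      (0 < ξ₂ p ∧ p * Real.exp (ξ₂ p) < 1 ∧ Qt2 b q (ξ₂ p) p = 0) ∧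
      ∀ ξ : ℝ, 0 < ξ → p * Real.exp ξ < 1 → Qt2 b q ξ p = 0 → ξ = ξ₂ p)
    (hcond : ξ₁ ≤ -Real.log (1 - q 0)) :
    ξ₁ ≤ sSup (ξ₂ '' Set.Ico (0 : ℝ) 1) := by
  set P := ∑ j ∈ Finset.range (a + 1), p₂ j with hPdef
  have hq0le : q 0 ≤ ∑ j ∈ Finset.range (b + 1), q j :=
    Finset.single_le_sum (fun j _ => hq j) (Finset.mem_range.2 (Nat.succ_pos b))
  have h1q0 : 0 < 1 - q 0 := by linarith
  have h1q0lt : 1 - q 0 < 1 := by linarith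
  -- value of ξ₂ at p = 0
  obtain ⟨⟨hpos0, hlt0, heq0⟩, huniq0⟩ := hξ₂ 0 ⟨le_refl 0, zero_lt_one⟩
  have hsum0 : ∀ ξ : ℝ, ∑ j ∈ Finset.range (b + 1), q j * (0:ℝ) ^ j * Real.exp (j * ξ)
      = q 0 := by
    intro ξ
    rw [Finset.sum_eq_single_of_mem 0 (Finset.mem_range.2 (Nat.succ_pos b))]
    · simp
    · intro j _ hj
      simp [zero_pow hj]
  have hval : ξ₂ 0 = -Real.log (1 - q 0) := by
    have h1 : (0:ℝ) < -Real.log (1 - q 0) := by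
      have := Real.log_neg h1q0 h1q0lt
      linarith
    have h2 : (0:ℝ) * Real.exp (-Real.log (1 - q 0)) < 1 := by simp
    have h3 : Qt2 b q (-Real.log (1 - q 0)) 0 = 0 := by
      unfold Qt2
      rw [hsum0, Real.exp_neg, Real.exp_log h1q0]
      field_simp
      ring
    exact (huniq0 _ h1 h2 h3).symm
  -- bounded above
  have hbdd : BddAbove (ξ₂ '' Set.Ico (0 : ℝ) 1) := by
    refine ⟨Real.log P⁻¹, ?_⟩
    rintro x ⟨p, hp, rfl⟩
    obtain ⟨⟨hpos, hlt, heq⟩, _⟩ := hξ₂ p hp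
    set ξ := ξ₂ p
    have hS : ∑ j ∈ Finset.range (b + 1), q j * p ^ j * Real.exp (j * ξ)
        ≤ ∑ j ∈ Finset.range (b + 1), q j := by
      apply Finset.sum_le_sum
      intro j _
      have h1 : q j * p ^ j * Real.exp (j * ξ) = q j * (p * Real.exp ξ) ^ j := by
        rw [mul_pow, Real.exp_nat_mul]; ring
      rw [h1]
      have hpe : 0 ≤ p * Real.exp ξ := mul_nonneg hp.1 (Real.exp_pos ξ).le
      calc q j * (p * Real.exp ξ) ^ j ≤ q j * 1 ^ j := by
            apply mul_le_mul_of_nonneg_left (pow_le_pow_left₀ hpe hlt.le j) (hq j)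
        _ = q j := by simp
    have hSnonneg : 0 ≤ ∑ j ∈ Finset.range (b + 1), q j * p ^ j * Real.exp (j * ξ) := by
      apply Finset.sum_nonneg
      intro j _
      exact mul_nonneg (mul_nonneg (hq j) (pow_nonneg hp.1 j)) (Real.exp_pos _).le
    -- from Qt2 = 0 : exp ξ * (1 - (1-p)*S) = 1
    set S := ∑ j ∈ Finset.range (b + 1), q j * p ^ j * Real.exp (j * ξ) with hSdef
    have hkey : Real.exp ξ * (1 - (1 - p) * S) = 1 := by
      have : Qt2 b q ξ p = 0 := heq
      unfold Qt2 at this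
      rw [← hSdef] at this
      linarith [this]
    have hpS : (1 - p) * S ≤ 1 - P := by
      have h1 : (1 - p) * S ≤ S := by
        nlinarith [mul_nonneg hp.1 hSnonneg]
      have h2 : ∑ j ∈ Finset.range (b + 1), q j = 1 - P := by linarith
      linarith [hS]
    have hexple : Real.exp ξ ≤ P⁻¹ := by
      have hfac : P ≤ 1 - (1 - p) * S := by linarith
      have hpos' : 0 < 1 - (1 - p) * S := lt_of_lt_of_le hp₂pos hfac
      have : Real.exp ξ = (1 - (1 - p) * S)⁻¹ := by
        field_simp at hkey ⊢
        linarith [hkey]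
      rw [this]
      exact inv_anti₀ hp₂pos hfac
    exact (Real.le_log_iff_exp_le (inv_pos.2 hp₂pos)).2 hexple
  have hmem : ξ₂ 0 ∈ ξ₂ '' Set.Ico (0 : ℝ) 1 :=
    ⟨0, ⟨le_refl 0, zero_lt_one⟩, rfl⟩
  calc ξ₁ ≤ -Real.log (1 - q 0) := hcond
    _ = ξ₂ 0 := hval.symm
    _ ≤ sSup (ξ₂ '' Set.Ico (0 : ℝ) 1) := le_csSup hbdd hmem
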